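/- There exists k₀ such that for every integer k ≥ k₀ the following holds: if G is a finite additive abelian group with gcd(|G|, 6) = 1 and X, Y ⊆ G are distinct dissociated sets with |X| = |Y| = k, then |E[X] ∩ E[Y]| ≤ C(k,2) − k/2. -/

import Mathlib

open Finset

/-- The restricted sumset `E[X] = X +̂ X = {x + x' : x, x' ∈ X, x ≠ x'}`. -/
def EHat {G : Type*} [AddCommGroup G] [DecidableEq G] (X : Finset G) : Finset G :=
  ((X ×ˢ X).filter fun p => p.1 ≠ p.2).image fun p => p.1 + p.2

/-- A set `X` is dissociated: any two representations of an element as a sum of four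
elements of `X` agree up to permutation. -/
def Dissociated {G : Type*} [AddCommGroup G] (X : Finset G) : Prop :=
  ∀ x₁ x₂ x₃ x₄ y₁ y₂ y₃ y₄ : G, x₁ ∈ X → x₂ ∈ X → x₃ ∈ X → x₄ ∈ X →
    y₁ ∈ X → y₂ ∈ X → y₃ ∈ X → y₄ ∈ X →
    x₁ + x₂ + x₃ + x₄ = y₁ + y₂ + y₃ + y₄ →
    ({x₁, x₂, x₃, x₄} : Multiset G) = {y₁, y₂, y₃, y₄}

section Aux

set_option linter.unusedSectionVars false

variable {G : Type*} [AddCommGroup G] [DecidableEq G]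

lemma add4 (a b c d : G) : a + b + c + d = (a + b) + (c + d) := add_assoc _ _ _

lemma mem_EHat {Z : Finset G} {s : G} :
    s ∈ EHat Z ↔ ∃ a b : G, a ∈ Z ∧ b ∈ Z ∧ a ≠ b ∧ a + b = s := by
  unfold EHat
  simp only [mem_image, mem_filter, mem_product, Prod.exists]
  exact ⟨fun ⟨a, b, ⟨⟨ha, hb⟩, hne⟩, h⟩ => ⟨a, b, ha, hb, hne, h⟩,
         fun ⟨a, b, ha, hb, hne, h⟩ => ⟨a, b, ⟨⟨ha, hb⟩, hne⟩, h⟩⟩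

lemma EHat_mono {Z Z' : Finset G} (h : Z ⊆ Z') : EHat Z ⊆ EHat Z' := by
  intro s hs
  rw [mem_EHat] at hs ⊢
  obtain ⟨a, b, ha, hb, hne, hs⟩ := hs
  exact ⟨a, b, h ha, h hb, hne, hs⟩

lemma pair_multiset_eq {a b a' b' : G} (h : ({a, b} : Multiset G) = {a', b'}) :
    (a = a' ∧ b = b') ∨ (a = b' ∧ b = a') := by
  have ha : a ∈ ({a', b'} : Multiset G) := by rw [← h]; simp
  simp only [Multiset.insert_eq_cons, Multiset.mem_cons, Multiset.mem_singleton] at ha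
  rcases ha with rfl | rfl
  · left
    refine ⟨rfl, ?_⟩
    rw [Multiset.insert_eq_cons, Multiset.insert_eq_cons, Multiset.cons_inj_right,
      Multiset.singleton_inj] at h
    exact h
  · right
    refine ⟨rfl, ?_⟩
    rw [Multiset.pair_comm a' a, Multiset.insert_eq_cons, Multiset.insert_eq_cons,
      Multiset.cons_inj_right, Multiset.singleton_inj] at h
    exact h

def PairUnique (W : Finset G) : Prop :=
  ∀ ⦃a b a' b' : G⦄, a ∈ W → b ∈ W → a' ∈ W → b' ∈ W → a + b = a' + b' →
    (a = a' ∧ b = b') ∨ (a = b' ∧ b = a')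

lemma Dissociated.pairUnique {W : Finset G} (hW : Dissociated W) : PairUnique W := by
  intro a b a' b' ha hb ha' hb' hsum
  have H := hW a b a a a' b' a a ha hb ha ha ha' hb' ha ha (by rw [hsum])
  have e1 : ({a, b, a, a} : Multiset G) = ({a, b} : Multiset G) + {a, a} := by
    simp only [Multiset.insert_eq_cons, Multiset.cons_add, Multiset.singleton_add]
  have e2 : ({a', b', a, a} : Multiset G) = ({a', b'} : Multiset G) + {a, a} := by
    simp only [Multiset.insert_eq_cons, Multiset.cons_add, Multiset.singleton_add]
  rw [e1, e2] at H
  exact pair_multiset_eq (add_right_cancel H)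

lemma threeAP {X : Finset G} (hD : Dissociated X) {s₁ s₂ s₃ : G}
    (h₁ : s₁ ∈ EHat X) (h₂ : s₂ ∈ EHat X) (h₃ : s₃ ∈ EHat X)
    (h : s₁ + s₃ = s₂ + s₂) : s₁ = s₂ := by
  obtain ⟨a, b, ha, hb, hab, rfl⟩ := mem_EHat.mp h₁
  obtain ⟨g, g', hg, hg', hgg', rfl⟩ := mem_EHat.mp h₂
  obtain ⟨e, f, he, hf, hef, rfl⟩ := mem_EHat.mp h₃
  have H := hD a b e f g g' g g' ha hb he hf hg hg' hg hg' (by rw [add4, add4, h])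
  have hamem : a ∈ ({g, g', g, g'} : Multiset G) := by rw [← H]; simp
  have hbmem : b ∈ ({g, g', g, g'} : Multiset G) := by rw [← H]; simp
  simp only [Multiset.insert_eq_cons, Multiset.mem_cons, Multiset.mem_singleton] at hamem hbmem
  have key : a + b = g + g' := by
    rcases hamem with rfl | rfl | rfl | rfl <;> rcases hbmem with h' | h' | h' | h' <;>
      first
        | (exact absurd h' hab)
        | (exact absurd h'.symm hab)
        | (exact absurd rfl hab)
        | (subst h'; first | rfl | exact add_comm _ _)
  rw [key]

lemma two_mul_choose_two (n : ℕ) : 2 * n.choose 2 = n * (n - 1) := by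
  induction n with
  | zero => rfl
  | succ n ih =>
    have h := Nat.choose_succ_succ n 1
    rw [Nat.choose_one_right] at h
    norm_num at h
    rw [h, Nat.mul_add, ih]
    cases n with
    | zero => rfl
    | succ m => simp [Nat.succ_sub_one]; ring

lemma choose_two_succ (n : ℕ) : (n + 1).choose 2 = n.choose 2 + n := by
  have h := Nat.choose_succ_succ n 1
  rw [Nat.choose_one_right] at h
  norm_num at h
  omega

lemma card_EHat {W : Finset G} (hPU : PairUnique W) :
    ∀ Z : Finset G, Z ⊆ W → (EHat Z).card = Z.card.choose 2 := by
  intro Z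
  induction Z using Finset.induction_on with
  | empty => intro _; simp [EHat]
  | @insert a Z ha ih =>
    intro hsub
    have haW : a ∈ W := hsub (mem_insert_self a Z)
    have hZW : Z ⊆ W := (subset_insert a Z).trans hsub
    have hset : EHat (insert a Z) = Z.image (fun w => a + w) ∪ EHat Z := by
      ext s
      simp only [mem_EHat, mem_union, mem_image, mem_insert]
      constructor
      · rintro ⟨p, q, hp, hq, hne, rfl⟩
        rcases hp with rfl | hp
        · rcases hq with rfl | hq
          · exact absurd rfl hne
          · exact Or.inl ⟨q, hq, rfl⟩
        · rcases hq with rfl | hq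
          · exact Or.inl ⟨p, hp, add_comm q p⟩
          · exact Or.inr ⟨p, q, hp, hq, hne, rfl⟩
      · rintro (⟨w, hw, rfl⟩ | ⟨p, q, hp, hq, hne, rfl⟩)
        · exact ⟨a, w, Or.inl rfl, Or.inr hw, fun h => ha (h ▸ hw), rfl⟩
        · exact ⟨p, q, Or.inr hp, Or.inr hq, hne, rfl⟩
    have hdisj : Disjoint (Z.image (fun w => a + w)) (EHat Z) := by
      rw [Finset.disjoint_left]
      rintro s hs hs'
      obtain ⟨w, hw, rfl⟩ := mem_image.mp hs
      obtain ⟨p, q, hp, hq, hne, hsum⟩ := mem_EHat.mp hs'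
      rcases hPU haW (hZW hw) (hZW hp) (hZW hq) hsum.symm with ⟨rfl, _⟩ | ⟨rfl, _⟩
      · exact ha hp
      · exact ha hq
    rw [hset, card_union_of_disjoint hdisj,
      card_image_of_injective _ (add_right_injective a), ih hZW,
      card_insert_of_notMem ha, choose_two_succ]
    omega

end Aux

theorem distinct_dissociated_overlap_bound :
    ∃ k₀ : ℕ, ∀ k : ℕ, k₀ ≤ k →
      ∀ (G : Type) [AddCommGroup G] [Fintype G] [DecidableEq G],
        Nat.gcd (Fintype.card G) 6 = 1 →
        ∀ X Y : Finset G, Dissociated X → Dissociated Y → X ≠ Y →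
          X.card = k → Y.card = k →
          ((EHat X ∩ EHat Y).card : ℝ) ≤ (k.choose 2 : ℝ) - (k : ℝ) / 2 := by
  use 100
  intro k hk G _ _ _ hgcd X Y hDX hDY hXY hXcard hYcard
  by_contra hcon
  push_neg at hcon
  set SA := EHat X with hSA
  set SB := EHat Y with hSB
  have hPUX : PairUnique X := hDX.pairUnique
  have hPUY : PairUnique Y := hDY.pairUnique
  have hAcard : SA.card = k.choose 2 := by rw [hSA, card_EHat hPUX X (subset_refl X), hXcard]
  have hBcard : SB.card = k.choose 2 := by rw [hSB, card_EHat hPUY Y (subset_refl Y), hYcard]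
  set u := (SA \ SB).card with hu_def
  have hsplitA : (SA ∩ SB).card + u = k.choose 2 := by
    rw [hu_def, ← hAcard]; exact Finset.card_inter_add_card_sdiff SA SB
  have hukey : 2 * u < k := by
    have hc1 : ((SA ∩ SB).card : ℝ) + (u : ℝ) = (k.choose 2 : ℝ) := by exact_mod_cast hsplitA
    have hc2 : (2 * u : ℝ) < (k : ℝ) := by linarith
    exact_mod_cast hc2
  have hBAonly : (SB \ SA).card = u := by
    have h1 : (SB ∩ SA).card + (SB \ SA).card = SB.card := Finset.card_inter_add_card_sdiff SB SA
    rw [Finset.inter_comm] at h1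
    omega
  have hmemA : ∀ {p q : G}, p ∈ X → q ∈ X → p ≠ q → p + q ∈ SA :=
    fun hp hq hne => mem_EHat.mpr ⟨_, _, hp, hq, hne, rfl⟩
  -- unmatched-partner counts
  have hUle : ∀ z ∈ X, ((X.erase z).filter fun w => z + w ∉ SB).card ≤ u := by
    intro z hz
    rw [hu_def]
    apply Finset.card_le_card_of_injOn (fun w => z + w)
    · intro w hw
      simp only [mem_coe, mem_filter, mem_erase] at hw
      exact Finset.mem_sdiff.mpr ⟨hmemA hz hw.1.2 (Ne.symm hw.1.1), hw.2⟩
    · intro w₁ _ w₂ _ h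
      exact add_left_cancel h
  have hU2 : ∀ z₁ z₂ : G, z₁ ∈ X → z₂ ∈ X → z₁ ≠ z₂ →
      ((X.erase z₁).filter fun w => z₁ + w ∉ SB).card +
        ((X.erase z₂).filter fun w => z₂ + w ∉ SB).card ≤ u + 2 := by
    intro z₁ z₂ hz₁ hz₂ hne
    set U₁ := (X.erase z₁).filter fun w => z₁ + w ∉ SB with hU₁
    set U₂ := (X.erase z₂).filter fun w => z₂ + w ∉ SB with hU₂
    have h1 : ((U₁.erase z₂).image fun w => z₁ + w) ⊆ SA \ SB := by
      intro v hv
      obtain ⟨w, hw, rfl⟩ := mem_image.mp hv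
      have hw' := mem_filter.mp (mem_of_mem_erase hw)
      exact mem_sdiff.mpr ⟨hmemA hz₁ (mem_erase.mp hw'.1).2 (Ne.symm (mem_erase.mp hw'.1).1), hw'.2⟩
    have h2 : ((U₂.erase z₁).image fun w => z₂ + w) ⊆ SA \ SB := by
      intro v hv
      obtain ⟨w, hw, rfl⟩ := mem_image.mp hv
      have hw' := mem_filter.mp (mem_of_mem_erase hw)
      exact mem_sdiff.mpr ⟨hmemA hz₂ (mem_erase.mp hw'.1).2 (Ne.symm (mem_erase.mp hw'.1).1), hw'.2⟩
    have hdisj : Disjoint ((U₁.erase z₂).image fun w => z₁ + w)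
        ((U₂.erase z₁).image fun w => z₂ + w) := by
      rw [Finset.disjoint_left]
      intro v hv1 hv2
      obtain ⟨w₁, hw₁, h1'⟩ := mem_image.mp hv1
      obtain ⟨w₂, hw₂, h2'⟩ := mem_image.mp hv2
      have hsum : z₁ + w₁ = z₂ + w₂ := h1'.trans h2'.symm
      have hw₁X : w₁ ∈ X := (mem_erase.mp (mem_filter.mp (mem_of_mem_erase hw₁)).1).2
      have hw₂X : w₂ ∈ X := (mem_erase.mp (mem_filter.mp (mem_of_mem_erase hw₂)).1).2
      rcases hPUX hz₁ hw₁X hz₂ hw₂X hsum with ⟨h, _⟩ | ⟨_, h⟩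
      · exact hne h
      · exact (mem_erase.mp hw₁).1 h
    have hcardle : ((U₁.erase z₂).image fun w => z₁ + w).card +
        ((U₂.erase z₁).image fun w => z₂ + w).card ≤ u := by
      rw [hu_def, ← card_union_of_disjoint hdisj]
      exact card_le_card (union_subset h1 h2)
    have himg1 : ((U₁.erase z₂).image fun w => z₁ + w).card = (U₁.erase z₂).card :=
      card_image_of_injective _ (add_right_injective z₁)
    have himg2 : ((U₂.erase z₁).image fun w => z₂ + w).card = (U₂.erase z₁).card :=
      card_image_of_injective _ (add_right_injective z₂)
    have hi1 : U₁.card ≤ (U₁.erase z₂).card + 1 := by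
      by_cases h : z₂ ∈ U₁
      · have := Finset.card_pos.mpr ⟨z₂, h⟩
        rw [card_erase_of_mem h]; omega
      · rw [Finset.erase_eq_of_notMem h]; omega
    have hi2 : U₂.card ≤ (U₂.erase z₁).card + 1 := by
      by_cases h : z₁ ∈ U₂
      · have := Finset.card_pos.mpr ⟨z₁, h⟩
        rw [card_erase_of_mem h]; omega
      · rw [Finset.erase_eq_of_notMem h]; omega
    omega
  -- existence of a fully matched element x₀
  have hxstar : ∃ x₀ ∈ X, ∀ w ∈ X.erase x₀, x₀ + w ∈ SB := by
    by_contra hno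
    push_neg at hno
    have hch : ∀ x : G, ∃ w, x ∈ X → (w ∈ X.erase x ∧ x + w ∉ SB) := by
      intro x
      by_cases hx : x ∈ X
      · obtain ⟨w, hw1, hw2⟩ := hno x hx
        exact ⟨w, fun _ => ⟨hw1, hw2⟩⟩
      · exact ⟨0, fun h => absurd h hx⟩
    choose Wf hWf using hch
    have hmaps : ∀ x ∈ X, x + Wf x ∈ SA \ SB := by
      intro x hx
      obtain ⟨h1, h2⟩ := hWf x hx
      rw [mem_erase] at h1
      exact mem_sdiff.mpr ⟨hmemA hx h1.2 (Ne.symm h1.1), h2⟩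
    have hlt : (SA \ SB).card * 2 < X.card := by rw [hXcard, ← hu_def]; omega
    obtain ⟨s, _, hfib⟩ := Finset.exists_lt_card_fiber_of_mul_lt_card_of_maps_to hmaps hlt
    rw [Finset.two_lt_card] at hfib
    obtain ⟨x₁, hx₁, x₂, hx₂, x₃, hx₃, h12, h13, h23⟩ := hfib
    simp only [mem_filter] at hx₁ hx₂ hx₃
    have hWmem : ∀ x ∈ X, Wf x ∈ X := fun x hx => (mem_erase.mp (hWf x hx).1).2
    rcases hPUX hx₁.1 (hWmem _ hx₁.1) hx₂.1 (hWmem _ hx₂.1) (by rw [hx₁.2, hx₂.2]) with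
      ⟨h, _⟩ | ⟨_, hb⟩
    · exact h12 h
    · rcases hPUX hx₁.1 (hWmem _ hx₁.1) hx₃.1 (hWmem _ hx₃.1) (by rw [hx₁.2, hx₃.2]) with
        ⟨h, _⟩ | ⟨_, hb'⟩
      · exact h13 h
      · exact h23 (hb.symm.trans hb')
  obtain ⟨x₀, hx0, hu0⟩ := hxstar
  have hXe : (X.erase x₀).card = k - 1 := by rw [card_erase_of_mem hx0, hXcard]
  -- chosen representations in SB
  have hrep : ∀ s : G, ∃ y t, s ∈ SB → (y ∈ Y ∧ t ∈ Y ∧ y ≠ t ∧ y + t = s) := by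
    intro s
    by_cases hs : s ∈ SB
    · obtain ⟨y, t, hy, ht, hne, hsum⟩ := mem_EHat.mp hs
      exact ⟨y, t, fun _ => ⟨hy, ht, hne, hsum⟩⟩
    · exact ⟨0, 0, fun h => absurd h hs⟩
  choose R₁ R₂ hR using hrep
  set av : G → Finset G := fun z => ((X.erase x₀).erase z).filter (fun w => z + w ∈ SB) with hav
  have hmemav : ∀ {z w : G}, w ∈ av z ↔ ((w ≠ z ∧ w ≠ x₀ ∧ w ∈ X) ∧ z + w ∈ SB) := by
    intro z w
    rw [hav]
    simp only [mem_filter, mem_erase]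
  have havcard : ∀ z ∈ X.erase x₀,
      k - 2 ≤ (av z).card + ((X.erase z).filter fun w => z + w ∉ SB).card := by
    intro z hz
    have hbase : ((X.erase x₀).erase z).card = k - 1 - 1 := by
      rw [card_erase_of_mem hz, hXe]
    have hsplit := Finset.card_filter_add_card_filter_not
      (s := (X.erase x₀).erase z) (p := fun w => z + w ∈ SB)
    have hsub : ((X.erase x₀).erase z).filter (fun w => ¬ (z + w ∈ SB)) ⊆
        (X.erase z).filter fun w => z + w ∉ SB := by
      intro w hw
      simp only [mem_filter, mem_erase] at hw ⊢
      exact ⟨⟨hw.1.1, hw.1.2.2⟩, hw.2⟩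
    have hle := card_le_card hsub
    rw [hav]
    simp only []
    omega
  have havsub : ∀ z, av z ⊆ X := by
    intro z w hw
    exact (hmemav.mp hw).1.2.2
  have hinter2 : ∀ z₁ ∈ X.erase x₀, ∀ z₂ ∈ X.erase x₀, 2 ≤ ((av z₁) ∩ (av z₂)).card := by
    intro z₁ hz₁ z₂ hz₂
    by_cases h12 : z₁ = z₂
    · subst h12
      rw [Finset.inter_self]
      have := havcard z₁ hz₁
      have := hUle z₁ (mem_erase.mp hz₁).2
      omega
    · have hci : (av z₁ ∩ av z₂).card + (av z₁ ∪ av z₂).card = (av z₁).card + (av z₂).card :=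
        Finset.card_inter_add_card_union _ _
      have hun : (av z₁ ∪ av z₂).card ≤ k := by
        rw [← hXcard]
        exact card_le_card (union_subset (havsub z₁) (havsub z₂))
      have hv1 := havcard z₁ hz₁
      have hv2 := havcard z₂ hz₂
      have hp := hU2 z₁ z₂ (mem_erase.mp hz₁).2 (mem_erase.mp hz₂).2 h12
      omega
  -- THE ENGINE: each star at z concentrates on a single vertex γ
  have hstar : ∀ z ∈ X.erase x₀, ∃ γ, γ ∈ Y ∧ ∀ w ∈ av z, ∃ t, t ∈ Y ∧ γ + t = x₀ + w := by
    intro z hz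
    obtain ⟨hzx₀, hzX⟩ := mem_erase.mp hz
    have hav2 : 2 ≤ (av z).card := by
      have := havcard z hz
      have := hUle z hzX
      omega
    have hEfact : ∀ w ∈ av z, R₁ (x₀ + w) ∈ Y ∧ R₂ (x₀ + w) ∈ Y ∧
        R₁ (x₀ + w) ≠ R₂ (x₀ + w) ∧ R₁ (x₀ + w) + R₂ (x₀ + w) = x₀ + w := by
      intro w hw
      have hw' := hmemav.mp hw
      exact hR _ (hu0 w (mem_erase.mpr ⟨hw'.1.2.1, hw'.1.2.2⟩))
    have hQfact : ∀ w ∈ av z, R₁ (z + w) ∈ Y ∧ R₂ (z + w) ∈ Y ∧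
        R₁ (z + w) ≠ R₂ (z + w) ∧ R₁ (z + w) + R₂ (z + w) = z + w :=
      fun w hw => hR _ ((hmemav.mp hw).2)
    have hquad : ∀ w ∈ av z, ∀ w' ∈ av z, w ≠ w' →
        ({R₁ (x₀+w), R₂ (x₀+w), R₁ (z+w'), R₂ (z+w')} : Multiset G)
          = {R₁ (x₀+w'), R₂ (x₀+w'), R₁ (z+w), R₂ (z+w)} := by
      intro w hw w' hw' hne
      obtain ⟨e1Y, e2Y, _, he⟩ := hEfact w hw
      obtain ⟨e1Y', e2Y', _, he'⟩ := hEfact w' hw'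
      obtain ⟨q1Y, q2Y, _, hq⟩ := hQfact w hw
      obtain ⟨q1Y', q2Y', _, hq'⟩ := hQfact w' hw'
      exact hDY _ _ _ _ _ _ _ _ e1Y e2Y q1Y' q2Y' e1Y' e2Y' q1Y q2Y
        (by rw [add4, add4, he, hq', he', hq]; abel)
    have hdec : ∀ w : G, ∃ β γ α, w ∈ av z →
        (β ∈ Y ∧ γ ∈ Y ∧ α ∈ Y ∧ β ≠ γ ∧ β ≠ α ∧ γ ≠ α ∧
          β + γ = x₀ + w ∧ β + α = z + w) := by
      intro w
      by_cases hw : w ∈ av z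
      case neg => exact ⟨0, 0, 0, fun h => absurd h hw⟩
      obtain ⟨w', hw', hww'⟩ := Finset.exists_mem_ne (s := av z) (by omega) w
      obtain ⟨he1Y, he2Y, heNe, heS⟩ := hEfact w hw
      obtain ⟨hq1Y, hq2Y, hqNe, hqS⟩ := hQfact w hw
      obtain ⟨he1Y', he2Y', heNe', heS'⟩ := hEfact w' hw'
      have M := hquad w hw w' hw' (Ne.symm hww')
      have hzx : z + w ≠ x₀ + w := fun h => hzx₀ (add_right_cancel h)
      by_cases c11 : R₁ (z+w) = R₁ (x₀+w)
      · refine ⟨R₁ (x₀+w), R₂ (x₀+w), R₂ (z+w), fun _ =>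
          ⟨he1Y, he2Y, hq2Y, heNe, ?_, ?_, heS, ?_⟩⟩
        · rw [← c11]; exact hqNe
        · intro h
          exact hzx (by rw [← hqS, c11, ← h, heS])
        · rw [← c11]; exact hqS
      by_cases c21 : R₂ (z+w) = R₁ (x₀+w)
      · refine ⟨R₁ (x₀+w), R₂ (x₀+w), R₁ (z+w), fun _ =>
          ⟨he1Y, he2Y, hq1Y, heNe, ?_, ?_, heS, ?_⟩⟩
        · rw [← c21]; exact hqNe.symm
        · intro h
          exact hzx (by rw [← hqS, ← h, c21, add_comm (R₂ (x₀+w)) (R₁ (x₀+w)), heS])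
        · rw [← c21, add_comm]; exact hqS
      by_cases c12 : R₁ (z+w) = R₂ (x₀+w)
      · refine ⟨R₂ (x₀+w), R₁ (x₀+w), R₂ (z+w), fun _ =>
          ⟨he2Y, he1Y, hq2Y, heNe.symm, ?_, ?_, by rw [add_comm]; exact heS, ?_⟩⟩
        · rw [← c12]; exact hqNe
        · intro h
          exact hzx (by rw [← hqS, c12, ← h, add_comm (R₂ (x₀+w)) (R₁ (x₀+w)), heS])
        · rw [← c12]; exact hqS
      by_cases c22 : R₂ (z+w) = R₂ (x₀+w)
      · refine ⟨R₂ (x₀+w), R₁ (x₀+w), R₁ (z+w), fun _ =>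
          ⟨he2Y, he1Y, hq1Y, heNe.symm, ?_, ?_, by rw [add_comm]; exact heS, ?_⟩⟩
        · rw [← c22]; exact hqNe.symm
        · intro h
          exact hzx (by rw [← hqS, ← h, c22, heS])
        · rw [← c22, add_comm]; exact hqS
      · exfalso
        have h1 : R₁ (x₀+w) ∈ ({R₁ (x₀+w'), R₂ (x₀+w'), R₁ (z+w), R₂ (z+w)} : Multiset G) := by
          rw [← M]; simp
        have h2 : R₂ (x₀+w) ∈ ({R₁ (x₀+w'), R₂ (x₀+w'), R₁ (z+w), R₂ (z+w)} : Multiset G) := by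
          rw [← M]; simp
        simp only [Multiset.insert_eq_cons, Multiset.mem_cons, Multiset.mem_singleton] at h1 h2
        rcases h1 with h1 | h1 | h1 | h1
        · rcases h2 with h2 | h2 | h2 | h2
          · exact heNe (h1.trans h2.symm)
          · exact hww' (add_left_cancel
              ((by rw [← heS, h1, h2, heS'] : x₀ + w = x₀ + w'))).symm
          · exact c12 h2.symm
          · exact c22 h2.symm
        · rcases h2 with h2 | h2 | h2 | h2
          · exact hww' (add_left_cancel
              ((by rw [← heS, h1, h2, add_comm (R₂ (x₀+w')) (R₁ (x₀+w')), heS'] :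
                x₀ + w = x₀ + w'))).symm
          · exact heNe (h1.trans h2.symm)
          · exact c12 h2.symm
          · exact c22 h2.symm
        · exact c11 h1.symm
        · exact c21 h1.symm
    choose Bf Γf Af hBf using hdec
    have hGc : ∀ w ∈ av z, ∀ w' ∈ av z, w ≠ w' → Γf w = Γf w' := by
      intro w hw w' hw' hne
      obtain ⟨hBY, hΓY, hAY, hBΓ, hBA, hΓA, hsE, hsQ⟩ := hBf w hw
      obtain ⟨hBY', hΓY', hAY', hBΓ', hBA', hΓA', hsE', hsQ'⟩ := hBf w' hw'
      have M : ({Bf w, Γf w, Bf w', Af w'} : Multiset G) = {Bf w', Γf w', Bf w, Af w} :=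
        hDY _ _ _ _ _ _ _ _ hBY hΓY hBY' hAY' hBY' hΓY' hBY hAY
          (by rw [add4, add4, hsE, hsQ', hsE', hsQ]; abel)
      by_contra hneΓ
      have hm1 : Γf w = Bf w' := by
        have hmem : Γf w ∈ ({Bf w', Γf w', Bf w, Af w} : Multiset G) := by rw [← M]; simp
        simp only [Multiset.insert_eq_cons, Multiset.mem_cons, Multiset.mem_singleton] at hmem
        rcases hmem with h | h | h | h
        · exact h
        · exact absurd h hneΓ
        · exact absurd h.symm hBΓ
        · exact absurd h hΓA
      have hm2 : Γf w' = Bf w := by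
        have hmem : Γf w' ∈ ({Bf w, Γf w, Bf w', Af w'} : Multiset G) := by rw [M]; simp
        simp only [Multiset.insert_eq_cons, Multiset.mem_cons, Multiset.mem_singleton] at hmem
        rcases hmem with h | h | h | h
        · exact h
        · exact absurd h.symm hneΓ
        · exact absurd h.symm hBΓ'
        · exact absurd h hΓA'
      rw [← hm1] at M
      rw [← hm2] at M
      have hΓAw' : Γf w ≠ Af w' := by rw [hm1]; exact hBA'
      have hcnt : Multiset.count (Γf w) ({Γf w', Γf w, Γf w, Af w'} : Multiset G) =
          Multiset.count (Γf w) ({Γf w, Γf w', Γf w', Af w} : Multiset G) := by rw [M]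
      have hne1 : ¬ (Γf w = Γf w') := hneΓ
      have hne2 : ¬ (Γf w = Af w') := hΓAw'
      have hne3 : ¬ (Γf w = Af w) := hΓA
      simp [Multiset.insert_eq_cons, Multiset.count_cons, Multiset.count_singleton,
        hne1, hne2, hne3] at hcnt
    obtain ⟨w₀, hw₀⟩ := Finset.card_pos.mp (by omega : 0 < (av z).card)
    obtain ⟨hBY₀, hΓY₀, _, hBΓ₀, _, _, hsE₀, _⟩ := hBf w₀ hw₀
    refine ⟨Γf w₀, hΓY₀, ?_⟩
    intro w hw
    obtain ⟨hBY, hΓY, _, hBΓ, _, _, hsE, _⟩ := hBf w hw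
    by_cases hww₀ : w = w₀
    · subst hww₀
      exact ⟨Bf w, hBY, by rw [add_comm]; exact hsE⟩
    · have hc := hGc w₀ hw₀ w hw (fun h => hww₀ h.symm)
      exact ⟨Bf w, hBY, by rw [hc, add_comm]; exact hsE⟩
  -- agreement of the star centers
  have hagree : ∀ z₁ ∈ X.erase x₀, ∀ z₂ ∈ X.erase x₀, ∀ γ₁ γ₂,
      γ₁ ∈ Y → γ₂ ∈ Y →
      (∀ w ∈ av z₁, ∃ t, t ∈ Y ∧ γ₁ + t = x₀ + w) →
      (∀ w ∈ av z₂, ∃ t, t ∈ Y ∧ γ₂ + t = x₀ + w) → γ₁ = γ₂ := by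
    intro z₁ hz₁ z₂ hz₂ γ₁ γ₂ hγ₁Y hγ₂Y hs₁ hs₂
    have h2 := hinter2 z₁ hz₁ z₂ hz₂
    obtain ⟨w, hw, w', hw', hww'⟩ := Finset.one_lt_card.mp (show 1 < (av z₁ ∩ av z₂).card by omega)
    obtain ⟨hw1, hw2⟩ := mem_inter.mp hw
    obtain ⟨hw1', hw2'⟩ := mem_inter.mp hw'
    obtain ⟨t₁, ht₁Y, ht₁⟩ := hs₁ w hw1
    obtain ⟨t₂, ht₂Y, ht₂⟩ := hs₂ w hw2
    rcases hPUY hγ₁Y ht₁Y hγ₂Y ht₂Y (ht₁.trans ht₂.symm) with ⟨h, _⟩ | ⟨_, hB⟩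
    · exact h
    · obtain ⟨t₁', ht₁Y', ht₁'⟩ := hs₁ w' hw1'
      obtain ⟨t₂', ht₂Y', ht₂'⟩ := hs₂ w' hw2'
      rcases hPUY hγ₁Y ht₁Y' hγ₂Y ht₂Y' (ht₁'.trans ht₂'.symm) with ⟨h, _⟩ | ⟨_, hB'⟩
      · exact h
      · exfalso
        apply hww'
        rw [hB] at ht₁
        rw [hB'] at ht₁'
        exact add_left_cancel (ht₁.symm.trans ht₁')
  -- global translate structure
  have hne1k : (0:ℕ) < (X.erase x₀).card := by omega
  obtain ⟨z₀, hz₀⟩ := Finset.card_pos.mp hne1k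
  obtain ⟨γs, hγsY, hγs⟩ := hstar z₀ hz₀
  have hglobal : ∀ z'' ∈ X.erase x₀, ∃ t, t ∈ Y ∧ γs + t = x₀ + z'' := by
    intro z'' hz''
    have h2 : 2 ≤ (av z'').card := by
      have := havcard z'' hz''
      have := hUle z'' (mem_erase.mp hz'').2
      omega
    obtain ⟨zp, hzp⟩ := Finset.card_pos.mp (by omega : 0 < (av z'').card)
    have hzp' := hmemav.mp hzp
    have hzpX : zp ∈ X.erase x₀ := mem_erase.mpr ⟨hzp'.1.2.1, hzp'.1.2.2⟩
    have hz''av : z'' ∈ av zp := by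
      rw [hmemav]
      exact ⟨⟨fun h => hzp'.1.1 h.symm, (mem_erase.mp hz'').1, (mem_erase.mp hz'').2⟩,
        by rw [add_comm]; exact hzp'.2⟩
    obtain ⟨γ', hγ'Y, hγ'⟩ := hstar zp hzpX
    obtain ⟨t, htY, ht⟩ := hγ' z'' hz''av
    refine ⟨t, htY, ?_⟩
    rw [hagree z₀ hz₀ zp hzpX γs γ' hγsY hγ'Y hγs hγ']
    exact ht
  by_cases hγx : γs = x₀
  · -- case c = 0 : X.erase x₀ ⊆ Y, contradiction via the unique outside element
    have hsub : X.erase x₀ ⊆ Y := by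
      intro z hzz
      obtain ⟨t, htY, ht⟩ := hglobal z hzz
      rw [hγx] at ht
      rw [← add_left_cancel ht]
      exact htY
    have hx₀Y : x₀ ∉ Y := by
      intro hmem
      apply hXY
      apply Finset.eq_of_subset_of_card_le
      · intro x hx
        by_cases hxx : x = x₀
        · rw [hxx]; exact hmem
        · exact hsub (mem_erase.mpr ⟨hxx, hx⟩)
      · rw [hXcard, hYcard]
    have hYXcard : (Y \ X).card ≤ 1 := by
      have h1 : X.erase x₀ ⊆ Y ∩ X :=
        fun w hw => mem_inter.mpr ⟨hsub hw, (mem_erase.mp hw).2⟩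
      have h2 : k - 1 ≤ (Y ∩ X).card := by rw [← hXe]; exact card_le_card h1
      have h3 : (Y ∩ X).card + (Y \ X).card = k := by
        rw [← hYcard]; exact Finset.card_inter_add_card_sdiff Y X
      omega
    obtain ⟨s₁, hs₁, s₂, hs₂, hss⟩ := Finset.one_lt_card.mp (by omega : 1 < (X.erase x₀).card)
    have hout : ∀ s ∈ X.erase x₀, ∃ b c, b ∈ Y ∧ b ∉ X ∧ c ∈ Y ∧ c ∈ X ∧ b + c = x₀ + s := by
      intro s hsmem
      obtain ⟨y, t, hyY, htY, hyt, hsum⟩ := mem_EHat.mp (hu0 s hsmem)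
      have hnotboth : ¬ (y ∈ X ∧ t ∈ X) := by
        rintro ⟨hyX, htX⟩
        rcases hPUX hx0 (mem_erase.mp hsmem).2 hyX htX hsum.symm with ⟨h, _⟩ | ⟨h, _⟩
        · exact hx₀Y (h ▸ hyY)
        · exact hx₀Y (h ▸ htY)
      by_cases hyX : y ∈ X
      · have htX : t ∉ X := fun h => hnotboth ⟨hyX, h⟩
        exact ⟨t, y, htY, htX, hyY, hyX, by rw [add_comm]; exact hsum⟩
      · have htX : t ∈ X := by
          by_contra htX
          exact hyt (Finset.card_le_one.mp hYXcard y (mem_sdiff.mpr ⟨hyY, hyX⟩) t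
            (mem_sdiff.mpr ⟨htY, htX⟩))
        exact ⟨y, t, hyY, hyX, htY, htX, hsum⟩
    obtain ⟨b₁, c₁, hb₁Y, hb₁X, hc₁Y, hc₁X, he₁⟩ := hout s₁ hs₁
    obtain ⟨b₂, c₂, hb₂Y, hb₂X, hc₂Y, hc₂X, he₂⟩ := hout s₂ hs₂
    have hbb : b₁ = b₂ := Finset.card_le_one.mp hYXcard b₁ (mem_sdiff.mpr ⟨hb₁Y, hb₁X⟩)
      b₂ (mem_sdiff.mpr ⟨hb₂Y, hb₂X⟩)
    have hkey : s₁ + c₂ = s₂ + c₁ := by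
      have h1 : x₀ + (s₁ + c₂) = b₁ + c₁ + c₂ := by rw [← add_assoc, ← he₁]
      have h2 : x₀ + (s₂ + c₁) = b₂ + c₂ + c₁ := by rw [← add_assoc, ← he₂]
      apply add_left_cancel (a := x₀)
      rw [h1, h2, hbb]
      abel
    rcases hPUX (mem_erase.mp hs₁).2 hc₂X (mem_erase.mp hs₂).2 hc₁X hkey with ⟨h, _⟩ | ⟨h1, _⟩
    · exact hss h
    · apply hx₀Y
      have hbx : b₁ = x₀ := by
        have he := he₁
        rw [← h1] at he
        exact add_right_cancel he
      rw [← hbx]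
      exact hb₁Y
  · -- case c ≠ 0 : Y contains a translate of X.erase x₀, contradiction via 3-AP-freeness
    set c := x₀ - γs with hc
    have hc0 : c ≠ 0 := sub_ne_zero_of_ne (fun h => hγx h.symm)
    have htr : ∀ z ∈ X.erase x₀, z + c ∈ Y := by
      intro z hzz
      obtain ⟨t, htY, ht⟩ := hglobal z hzz
      have hzc : z + c = t := by
        apply add_left_cancel (a := γs)
        rw [ht, hc]
        abel
      rw [hzc]
      exact htY
    have hodd : ∀ g : G, g + g = 0 → g = 0 := by
      intro g hg
      have h2 : addOrderOf g ∣ 2 := addOrderOf_dvd_of_nsmul_eq_zero (by rw [two_nsmul]; exact hg)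
      have hcg : addOrderOf g ∣ Fintype.card G := addOrderOf_dvd_card
      have h6 : addOrderOf g ∣ Nat.gcd (Fintype.card G) 6 :=
        Nat.dvd_gcd hcg (h2.trans (by norm_num))
      rw [hgcd] at h6
      rw [← AddMonoid.addOrderOf_eq_one_iff]
      exact Nat.dvd_one.mp h6
    have hs2c0 : c + c ≠ 0 := fun h => hc0 (hodd c h)
    set X₃ := (X.erase x₀).image (fun z => z + c) with hX₃
    have hX₃Y : X₃ ⊆ Y := by
      intro v hv
      obtain ⟨z, hz, rfl⟩ := mem_image.mp hv
      exact htr z hz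
    have hX₃card : X₃.card = k - 1 := by
      rw [hX₃, card_image_of_injective _ (add_left_injective c), hXe]
    have hKcard : (EHat X₃).card = (k-1).choose 2 := by
      rw [card_EHat hPUY X₃ hX₃Y, hX₃card]
    have hKB : EHat X₃ ⊆ SB := EHat_mono hX₃Y
    set I := SA ∩ (SA.image (fun v => v + (c + c))) with hI
    have hKI : EHat X₃ ∩ SA ⊆ I := by
      intro v hv
      obtain ⟨hvK, hvA⟩ := mem_inter.mp hv
      refine mem_inter.mpr ⟨hvA, ?_⟩
      obtain ⟨a', b', ha', hb', hne', hsum'⟩ := mem_EHat.mp hvK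
      rw [hX₃] at ha' hb'
      obtain ⟨z₁, hz₁, rfl⟩ := mem_image.mp ha'
      obtain ⟨z₂, hz₂, rfl⟩ := mem_image.mp hb'
      have hz12 : z₁ ≠ z₂ := fun h => hne' (by rw [h])
      refine mem_image.mpr ⟨z₁ + z₂,
        hmemA (mem_erase.mp hz₁).2 (mem_erase.mp hz₂).2 hz12, ?_⟩
      rw [← hsum']
      abel
    have hIlow : (k-1).choose 2 ≤ I.card + u := by
      have h1 : (EHat X₃ ∩ SA).card + (EHat X₃ \ SA).card = (EHat X₃).card :=
        Finset.card_inter_add_card_sdiff _ _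
      have h2 : EHat X₃ \ SA ⊆ SB \ SA := fun v hv =>
        mem_sdiff.mpr ⟨hKB (mem_sdiff.mp hv).1, (mem_sdiff.mp hv).2⟩
      have h3 := card_le_card h2
      have h4 := card_le_card hKI
      omega
    have hIup : 2 * I.card ≤ k.choose 2 := by
      have hIA : I ⊆ SA := inter_subset_left
      have hJA : I.image (fun v => v - (c + c)) ⊆ SA := by
        intro v hv
        obtain ⟨v', hv', rfl⟩ := mem_image.mp hv
        obtain ⟨h1, h2⟩ := mem_inter.mp hv'
        obtain ⟨w', hw', hww⟩ := mem_image.mp h2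
        have he : v' - (c + c) = w' := by rw [← hww]; abel
        rw [he]
        exact hw'
      have hdisj : Disjoint I (I.image (fun v => v - (c + c))) := by
        rw [Finset.disjoint_left]
        intro v hvI hvJ
        obtain ⟨v', hv', hvv⟩ := mem_image.mp hvJ
        have h1 : v ∈ SA := hIA hvI
        have h2 : v - (c + c) ∈ SA := by
          obtain ⟨_, him⟩ := mem_inter.mp hvI
          obtain ⟨w', hw', hww⟩ := mem_image.mp him
          have he : v - (c + c) = w' := by rw [← hww]; abel
          rw [he]
          exact hw'
        have h3 : v + (c + c) ∈ SA := by
          have hveq : v' = v + (c + c) := by rw [← hvv]; abel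
          rw [← hveq]
          exact hIA hv'
        have h30 := threeAP hDX h2 h1 h3 (by abel)
        exact hs2c0 (by
          have := sub_eq_self.mp h30
          exact this)
      have hJcard : (I.image (fun v => v - (c + c))).card = I.card :=
        card_image_of_injective _ (fun a b h => by
          have := congrArg (fun x => x + (c + c)) h
          simpa using this)
      have hcard2 : I.card + (I.image (fun v => v - (c + c))).card ≤ k.choose 2 := by
        rw [← hAcard, ← card_union_of_disjoint hdisj]
        exact card_le_card (union_subset hIA hJA)
      omega
    have hch1 : 2 * ((k-1).choose 2) = (k-1) * (k-2) := by
      rw [two_mul_choose_two]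
      congr 1
    have hch2 : 2 * (k.choose 2) = k * (k-1) := two_mul_choose_two k
    have hstep : (k-1) * (2 * (k-2)) ≤ (k-1) * (k+2) := by
      have e1 : (k-1) * (2*(k-2)) = 2 * ((k-1)*(k-2)) := by ring
      have e2 : (k-1)*(k+2) = k*(k-1) + 2*(k-1) := by ring
      rw [e1, e2, ← hch1, ← hch2]
      omega
    have hfin := Nat.le_of_mul_le_mul_left hstep (by omega : 0 < k - 1)
    omega
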